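/- There exists a constant L_ψ > 0 such that |ψ(x,z) − ψ(x′,z)| ≤ L_ψ(1 + |z|²)·min(|x − x′|, 1) for all x, x′ ∈ K and all z ∈ H. -/

import Mathlib

set_option maxHeartbeats 1000000


open scoped InnerProductSpace

/-- There exists a constant `L_ψ > 0` such that
`|ψ(x,z) − ψ(x′,z)| ≤ L_ψ (1 + ‖z‖²) · min(‖x − x′‖, 1)` for all `x, x′ ∈ K`, `z ∈ H`. -/
theorem hamiltonian_lipschitz_in_x
    {K H U : Type*}
    [NormedAddCommGroup K] [InnerProductSpace ℝ K] [CompleteSpace K]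
    [TopologicalSpace.SeparableSpace K]
    [NormedAddCommGroup H] [InnerProductSpace ℝ H] [CompleteSpace H]
    [TopologicalSpace.SeparableSpace H]
    [NormedAddCommGroup U] [InnerProductSpace ℝ U] [CompleteSpace U]
    [TopologicalSpace.SeparableSpace U]
    (r : K → U → H) (l : K → U → ℝ)
    (M_r L_r m_l c_l M_l L_l : ℝ)
    (hMr : 0 < M_r) (hLr : 0 < L_r) (hml : 0 < m_l) (hcl : 0 < c_l)
    (hMl : 0 < M_l) (hLl : 0 < L_l)
    (hr : ∀ x u, ‖r x u‖ ≤ M_r * (1 + ‖u‖))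
    (hr_lip : ∀ x y u, ‖r x u - r y u‖ ≤ L_r * min ‖x - y‖ 1 * (1 + ‖u‖))
    (ustar : U) (hustar : ∀ x, r x ustar = 0)
    (hl_lb : ∀ x u, m_l * ‖u‖ ^ 2 - c_l ≤ l x u)
    (hl_ub : ∀ x u, l x u ≤ M_l * (1 + ‖u‖ ^ 2))
    (hl_lip : ∀ x y u, |l x u - l y u| ≤ L_l * ‖x - y‖)
    (ψ : K → H → ℝ)
    (hψ : ∀ x z, ψ x z = ⨅ u : U, (l x u - ⟪z, r x u⟫_ℝ)) :
    ∃ L_ψ > 0, ∀ (x x' : K) (z : H),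
      |ψ x z - ψ x' z| ≤ L_ψ * (1 + ‖z‖ ^ 2) * min ‖x - x'‖ 1 := by
  have hU : Nonempty U := ⟨ustar⟩
  set s : ℝ := ‖ustar‖ with hs
  have hz2 : ∀ z : H, ‖z‖ ≤ 1 + ‖z‖ ^ 2 := fun z => by nlinarith [sq_nonneg (‖z‖ - 1)]
  -- inner product bound
  have hip : ∀ (x : K) (z : H) (u : U), ⟪z, r x u⟫_ℝ ≤ ‖z‖ * (M_r * (1 + ‖u‖)) := by
    intro x z u
    calc ⟪z, r x u⟫_ℝ ≤ ‖z‖ * ‖r x u‖ := real_inner_le_norm z _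
      _ ≤ ‖z‖ * (M_r * (1 + ‖u‖)) := mul_le_mul_of_nonneg_left (hr x u) (norm_nonneg z)
  -- lower bound for the integrand
  have hlow : ∀ (x : K) (z : H) (u : U),
      -(c_l + M_r * ‖z‖ + (M_r * ‖z‖) ^ 2 / (4 * m_l)) ≤ l x u - ⟪z, r x u⟫_ℝ := by
    intro x z u
    have h1 := hl_lb x u
    have h2 := hip x z u
    have key : M_r * ‖z‖ * ‖u‖ - m_l * ‖u‖ ^ 2 ≤ (M_r * ‖z‖) ^ 2 / (4 * m_l) := by
      rw [le_div_iff₀ (by positivity : (0:ℝ) < 4 * m_l)]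
      nlinarith [sq_nonneg (2 * m_l * ‖u‖ - M_r * ‖z‖)]
    nlinarith [key, h1, h2]
  have hbb : ∀ (x : K) (z : H), BddBelow (Set.range fun u : U => l x u - ⟪z, r x u⟫_ℝ) := by
    intro x z
    exact ⟨_, fun y hy => by obtain ⟨u, rfl⟩ := hy; exact hlow x z u⟩
  have hψ_ub : ∀ (x : K) (z : H), ψ x z ≤ M_l * (1 + s ^ 2) := by
    intro x z
    have h1 : (⨅ u : U, (l x u - ⟪z, r x u⟫_ℝ)) ≤ l x ustar - ⟪z, r x ustar⟫_ℝ :=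
      ciInf_le (hbb x z) ustar
    have hr0 : ⟪z, r x ustar⟫_ℝ = (0:ℝ) := by rw [hustar x]; exact inner_zero_right z
    have h2 := hl_ub x ustar
    rw [hψ, hs]
    rw [hr0] at h1
    linarith
  have hψ_lb : ∀ (x : K) (z : H),
      -(c_l + M_r * ‖z‖ + (M_r * ‖z‖) ^ 2 / (4 * m_l)) ≤ ψ x z := by
    intro x z; rw [hψ]; exact le_ciInf (hlow x z)
  -- constants
  set c0 : ℝ := c_l + M_l * (1 + s ^ 2) + 1 with hc0
  have hc0pos : 0 < c0 := by nlinarith [sq_nonneg s]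
  set N : ℝ := m_l * L_l + L_r * (2 * m_l + c0) + 2 * L_r * M_r with hN
  have hNpos : 0 < N := by rw [hN]; nlinarith
  set E : ℝ := N / m_l with hE
  have hEpos : 0 < E := div_pos hNpos hml
  set D : ℝ := M_l * (1 + s ^ 2) + c_l + M_r + M_r ^ 2 / (4 * m_l) with hD
  have hDpos : 0 < D := by
    have h0 : 0 ≤ M_r ^ 2 / (4 * m_l) := div_nonneg (sq_nonneg _) (by linarith)
    rw [hD]; nlinarith [sq_nonneg s]
  clear_value s c0 N E D
  -- key one-sided Lipschitz estimate when ‖x - x'‖ ≤ 1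
  have key : ∀ (x x' : K) (z : H), ‖x - x'‖ ≤ 1 →
      ψ x z - ψ x' z ≤ E * (1 + ‖z‖ ^ 2) * ‖x - x'‖ := by
    intro x x' z hd
    rw [sub_le_iff_le_add, add_comm]
    refine le_of_forall_pos_le_add ?_
    intro ε hε
    set ε' : ℝ := min ε 1 with hε'def
    have hε'pos : 0 < ε' := lt_min hε one_pos
    have hε'le : ε' ≤ 1 := min_le_right _ _
    have hlt : (⨅ u : U, (l x' u - ⟪z, r x' u⟫_ℝ)) < ψ x' z + ε' := by
      rw [← hψ]; exact lt_add_of_pos_right _ hε'pos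
    obtain ⟨u, hu⟩ := exists_lt_of_ciInf_lt hlt
    -- bound on ‖u‖ : effective controls
    have hG_lb : m_l * ‖u‖ ^ 2 - c_l - ‖z‖ * (M_r * (1 + ‖u‖)) ≤ l x' u - ⟪z, r x' u⟫_ℝ := by
      have := hip x' z u
      linarith [hl_lb x' u]
    have hquad : m_l * ‖u‖ ^ 2 ≤ (c_l + M_l * (1 + s ^ 2) + 1 + M_r * ‖z‖) + (M_r * ‖z‖) * ‖u‖ := by
      have h3 := hψ_ub x' z
      nlinarith [hG_lb, hu, h3, hε'le]
    have hT : m_l * ‖u‖ ≤ m_l + c0 + 2 * M_r * ‖z‖ := by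
      nlinarith [hquad, norm_nonneg u, mul_nonneg hMr.le (norm_nonneg z), sq_nonneg (‖u‖ - 1)]
    -- difference of integrands
    have hmin : min ‖x - x'‖ 1 = ‖x - x'‖ := min_eq_left hd
    have hdiff : l x u - ⟪z, r x u⟫_ℝ ≤ (l x' u - ⟪z, r x' u⟫_ℝ)
        + L_l * ‖x - x'‖ + ‖z‖ * (L_r * ‖x - x'‖ * (1 + ‖u‖)) := by
      have h1 : l x u - l x' u ≤ L_l * ‖x - x'‖ := (abs_le.mp (hl_lip x x' u)).2
      have h2 : ⟪z, r x' u⟫_ℝ - ⟪z, r x u⟫_ℝ ≤ ‖z‖ * (L_r * ‖x - x'‖ * (1 + ‖u‖)) := by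
        have h3 : ⟪z, r x' u - r x u⟫_ℝ ≤ ‖z‖ * ‖r x' u - r x u‖ := real_inner_le_norm z _
        have h4 : ‖r x' u - r x u‖ ≤ L_r * ‖x - x'‖ * (1 + ‖u‖) := by
          have := hr_lip x' x u
          rwa [norm_sub_rev x' x, hmin] at this
        have h5 : ⟪z, r x' u - r x u⟫_ℝ = ⟪z, r x' u⟫_ℝ - ⟪z, r x u⟫_ℝ := inner_sub_right z _ _
        rw [← h5]
        exact h3.trans (mul_le_mul_of_nonneg_left h4 (norm_nonneg z))
      linarith
    -- bound the increment by E (1 + ‖z‖²) ‖x - x'‖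
    have hmE : m_l * E = N := by rw [hE]; field_simp
    have hstepN : m_l * (L_l + ‖z‖ * (L_r * (1 + ‖u‖))) ≤ N * (1 + ‖z‖ ^ 2) := by
      have hTz : (L_r * ‖z‖) * (m_l * ‖u‖) ≤ (L_r * ‖z‖) * (m_l + c0 + 2 * M_r * ‖z‖) :=
        mul_le_mul_of_nonneg_left hT (mul_nonneg hLr.le (norm_nonneg z))
      have hza : (L_r * (2 * m_l + c0)) * ‖z‖ ≤ (L_r * (2 * m_l + c0)) * (1 + ‖z‖ ^ 2) :=
        mul_le_mul_of_nonneg_left (hz2 z) (by nlinarith)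
      rw [hN]
      nlinarith [hTz, hza, mul_nonneg (mul_nonneg hml.le hLl.le) (sq_nonneg ‖z‖),
        mul_nonneg (mul_nonneg hLr.le hMr.le) (sq_nonneg ‖z‖), norm_nonneg z, norm_nonneg u]
    have hstep : L_l + ‖z‖ * (L_r * (1 + ‖u‖)) ≤ E * (1 + ‖z‖ ^ 2) := by
      rw [← mul_le_mul_iff_of_pos_left hml]
      have hrw : m_l * (E * (1 + ‖z‖ ^ 2)) = N * (1 + ‖z‖ ^ 2) := by rw [← mul_assoc, hmE]
      rw [hrw]
      exact hstepN
    have hincr : L_l * ‖x - x'‖ + ‖z‖ * (L_r * ‖x - x'‖ * (1 + ‖u‖))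
        ≤ E * (1 + ‖z‖ ^ 2) * ‖x - x'‖ := by
      have hd0 : (0:ℝ) ≤ ‖x - x'‖ := norm_nonneg _
      nlinarith [mul_le_mul_of_nonneg_right hstep hd0]
    have h6 : ψ x z ≤ l x u - ⟪z, r x u⟫_ℝ := by rw [hψ]; exact ciInf_le (hbb x z) u
    have h7 : ε' ≤ ε := min_le_left _ _
    linarith [h6, hdiff, hincr, hu]
  -- conclusion
  refine ⟨D + E, by linarith, ?_⟩
  intro x x' z
  have h1z : (0:ℝ) < 1 + ‖z‖ ^ 2 := by positivity
  rcases le_or_gt ‖x - x'‖ 1 with hle | hgt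
  · have hmin : min ‖x - x'‖ 1 = ‖x - x'‖ := min_eq_left hle
    rw [hmin]
    have h1 := key x x' z hle
    have h2 := key x' x z (by rwa [norm_sub_rev])
    rw [norm_sub_rev x' x] at h2
    rw [abs_sub_le_iff]
    constructor
    · refine h1.trans ?_
      nlinarith [norm_nonneg (x - x')]
    · refine h2.trans ?_
      nlinarith [norm_nonneg (x - x')]
  · have hmin : min ‖x - x'‖ 1 = 1 := min_eq_right hgt.le
    rw [hmin, mul_one]
    have hql : (M_r * ‖z‖) ^ 2 / (4 * m_l) = M_r ^ 2 / (4 * m_l) * ‖z‖ ^ 2 := by ring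
    have hq : (0:ℝ) ≤ M_r ^ 2 / (4 * m_l) := div_nonneg (sq_nonneg _) (by linarith)
    have hb1 := hψ_ub x z
    have hb2 := hψ_ub x' z
    have hb3 := hψ_lb x z
    have hb4 := hψ_lb x' z
    rw [hql] at hb3 hb4
    have hDb : c_l + M_r * ‖z‖ + M_r ^ 2 / (4 * m_l) * ‖z‖ ^ 2 + M_l * (1 + s ^ 2)
        ≤ D * (1 + ‖z‖ ^ 2) := by
      rw [hD]
      nlinarith [mul_le_mul_of_nonneg_left (hz2 z) hMr.le,
        mul_nonneg hq (sq_nonneg ‖z‖), hq,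
        mul_nonneg (mul_nonneg hMl.le (by positivity : (0:ℝ) ≤ 1 + s ^ 2)) (sq_nonneg ‖z‖),
        mul_nonneg hcl.le (sq_nonneg ‖z‖)]
    have hE0 : 0 ≤ E * (1 + ‖z‖ ^ 2) := mul_nonneg hEpos.le h1z.le
    rw [abs_sub_le_iff]
    constructor <;> linarith [hb1, hb2, hb3, hb4, hDb, hE0]
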